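/- arXiv:1310.1406 — 3 statements merged into one kernel-verified Lean document; each statement's English description precedes it below -/
import Mathlib

section
/- Let κ₁ > 0, κ₂ > 0 with κ₂ = (1 + c)κ₁ for some c > 0. Then for every ξ ∈ ℝ², Im( ((−κ₁ + iκ₂)/(κ₁² + κ₂²)) · (|ξ|² − (κ₁+iκ₂)²)^{1/2} ) ≥ (1/2)(1 − κ₁²/κ₂²)^{1/2} ≥ (1/2)(1 − 1/(1+c)²)^{1/2}. -/
open Complex Real

/-- uniform coercivity lower bound: for `κ₂ = (1+c)κ₁`, `c > 0`, `κ₁ > 0`,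
`Im(((−κ₁+iκ₂)/(κ₁²+κ₂²))·(‖ξ‖² − (κ₁+iκ₂)²)^(1/2)) ≥ (1/2)(1 − κ₁²/κ₂²)^(1/2)
  ≥ (1/2)(1 − 1/(1+c)²)^(1/2)`. -/
theorem cfier_coercivity_bound (κ₁ κ₂ c : ℝ) (hκ₁ : 0 < κ₁) (hc : 0 < c)
    (hκ₂ : κ₂ = (1 + c) * κ₁) (ξ : EuclideanSpace ℝ (Fin 2)) :
    (1 / 2) * Real.sqrt (1 - κ₁ ^ 2 / κ₂ ^ 2) ≤
      ((((-κ₁ : ℂ) + (κ₂ : ℂ) * Complex.I) / ((κ₁ : ℂ) ^ 2 + (κ₂ : ℂ) ^ 2)) *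
        ((‖ξ‖ ^ 2 : ℂ) - ((κ₁ : ℂ) + (κ₂ : ℂ) * Complex.I) ^ 2) ^ ((1 : ℂ) / 2)).im ∧
    (1 / 2) * Real.sqrt (1 - 1 / (1 + c) ^ 2) ≤ (1 / 2) * Real.sqrt (1 - κ₁ ^ 2 / κ₂ ^ 2) := by
  have hκ₂pos : 0 < κ₂ := by nlinarith
  have hκ12 : κ₁ < κ₂ := by nlinarith
  set t : ℝ := ‖ξ‖ ^ 2 with ht
  have htpos : 0 ≤ t := sq_nonneg _
  set z : ℂ := (‖ξ‖ ^ 2 : ℂ) - ((κ₁ : ℂ) + (κ₂ : ℂ) * Complex.I) ^ 2 with hz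
  have hzre : z.re = t - κ₁ ^ 2 + κ₂ ^ 2 := by
    simp [hz, Complex.sub_re, Complex.add_re, pow_two, Complex.mul_re]
    ring
  have hzim : z.im = -(2 * κ₁ * κ₂) := by
    simp [hz, pow_two, Complex.mul_im]
    ring
  set w : ℂ := z ^ ((1 : ℂ) / 2) with hw
  have hw2 : w ^ 2 = z := by
    rw [hw, show ((1 : ℂ) / 2) = (((2 : ℕ) : ℂ))⁻¹ by norm_num]
    exact Complex.cpow_nat_inv_pow z two_ne_zero
  set a : ℝ := w.re with ha
  set b : ℝ := w.im with hb
  have hane : 0 ≤ a := by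
    rw [ha, hw, show ((1 : ℂ) / 2) = (2⁻¹ : ℂ) by norm_num, Complex.cpow_inv_two_re]
    exact Real.sqrt_nonneg _
  have hre : a ^ 2 - b ^ 2 = t - κ₁ ^ 2 + κ₂ ^ 2 := by
    have h := congrArg Complex.re hw2
    rw [hzre] at h
    simpa [pow_two, Complex.mul_re, ← ha, ← hb] using h
  have him : 2 * (a * b) = -(2 * κ₁ * κ₂) := by
    have h := congrArg Complex.im hw2
    rw [hzim] at h
    simp [pow_two, Complex.mul_im, ← ha, ← hb] at h
    linarith
  have hab : a * b = -(κ₁ * κ₂) := by linarith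
  have hapos : 0 < a := by
    rcases lt_or_eq_of_le hane with h | h
    · exact h
    · exfalso; nlinarith
  have hbneg : b < 0 := by nlinarith
  have haκ₂ : κ₂ ≤ a := by
    have hmul : a ^ 2 * (κ₂ ^ 2 - κ₁ ^ 2) ≤ a ^ 2 * (a ^ 2 - b ^ 2) :=
      mul_le_mul_of_nonneg_left (by linarith) (sq_nonneg a)
    have habsq : a ^ 2 * b ^ 2 = κ₁ ^ 2 * κ₂ ^ 2 := by
      rw [← mul_pow, hab]; ring
    have h1 : κ₂ ^ 2 ≤ a ^ 2 := by nlinarith [sq_nonneg a, mul_pos hκ₁ hκ₁]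
    nlinarith [h1, hapos, hκ₂pos]
  -- the imaginary part of the product
  have hden : (0 : ℝ) < κ₁ ^ 2 + κ₂ ^ 2 := by positivity
  have hdenC : ((κ₁ : ℂ) ^ 2 + (κ₂ : ℂ) ^ 2) = ((κ₁ ^ 2 + κ₂ ^ 2 : ℝ) : ℂ) := by
    push_cast; ring
  have himprod :
      ((((-κ₁ : ℂ) + (κ₂ : ℂ) * Complex.I) / ((κ₁ : ℂ) ^ 2 + (κ₂ : ℂ) ^ 2)) * w).im
        = (κ₂ * a - κ₁ * b) / (κ₁ ^ 2 + κ₂ ^ 2) := by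
    rw [hdenC, div_mul_eq_mul_div, Complex.div_ofReal_im]
    simp [Complex.mul_im, Complex.add_re, Complex.add_im, ← ha, ← hb]
    ring
  constructor
  · rw [himprod]
    have hkey : (1 : ℝ) ≤ (κ₂ * a - κ₁ * b) / (κ₁ ^ 2 + κ₂ ^ 2) := by
      rw [le_div_iff₀ hden]
      nlinarith [mul_nonneg (sub_nonneg.2 haκ₂)
        (by nlinarith : (0 : ℝ) ≤ κ₂ * a - κ₁ ^ 2)]
    have hsqrt : Real.sqrt (1 - κ₁ ^ 2 / κ₂ ^ 2) ≤ 1 := by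
      have : 0 < κ₁ ^ 2 / κ₂ ^ 2 := by positivity
      calc Real.sqrt (1 - κ₁ ^ 2 / κ₂ ^ 2) ≤ Real.sqrt 1 := Real.sqrt_le_sqrt (by linarith)
        _ = 1 := Real.sqrt_one
    linarith [hkey, hsqrt]
  · have : κ₁ ^ 2 / κ₂ ^ 2 = 1 / (1 + c) ^ 2 := by
      rw [hκ₂]
      field_simp
    rw [this]
end

section
/- Let K = κ + iε with κ > 0 and ε > 0, and let γ > 0. Define α := Re((i/K)·(γ − K²)^{1/2}), where the square root is the branch with positive real part and negative imaginary part. Then α = (ε·Re((γ−K²)^{1/2}) − κ·Im((γ−K²)^{1/2}))/(κ² + ε²) and α > 0. -/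
open Complex Real

/-- for `K = κ + iε` with `κ > 0`, `ε > 0` and `γ > 0`,
`α := Re((i/K)(γ − K²)^(1/2))` satisfies
`α = (ε·Re((γ−K²)^(1/2)) − κ·Im((γ−K²)^(1/2)))/(κ² + ε²)` and `α > 0`. -/
theorem ps_alpha_positive (κ ε γ : ℝ) (hκ : 0 < κ) (hε : 0 < ε) (hγ : 0 < γ) :
    let K : ℂ := (κ : ℂ) + (ε : ℂ) * Complex.I
    let w : ℂ := ((γ : ℂ) - K ^ 2) ^ ((1 : ℂ) / 2)
    let α : ℝ := ((Complex.I / K) * w).re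
    α = (ε * w.re - κ * w.im) / (κ ^ 2 + ε ^ 2) ∧ 0 < α := by
  intro K w α
  have hden : (0 : ℝ) < κ ^ 2 + ε ^ 2 := by positivity
  have hKre : K.re = κ := by simp [K]
  have hKim : K.im = ε := by simp [K]
  have hnormSq : Complex.normSq K = κ ^ 2 + ε ^ 2 := by
    simp [Complex.normSq_apply, hKre, hKim]; ring
  -- the base z := γ - K^2 has negative imaginary part
  set z : ℂ := (γ : ℂ) - K ^ 2 with hz
  have hzim : z.im = -(2 * κ * ε) := by
    simp [hz, K, Complex.sub_im, Complex.mul_im, Complex.mul_re, pow_two]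
    ring
  have hzimneg : z.im < 0 := by
    rw [hzim]; nlinarith
  have hzne : z ≠ 0 := by
    intro h; rw [h] at hzimneg; simp at hzimneg
  -- express w via exp
  have hw : w = Complex.exp (Complex.log z * ((1 : ℂ) / 2)) := by
    rw [show w = z ^ ((1 : ℂ) / 2) from rfl, Complex.cpow_def_of_ne_zero hzne]
  have harglt : Complex.arg z < 0 := Complex.arg_neg_iff.mpr hzimneg
  have harggt : -π < Complex.arg z := Complex.neg_pi_lt_arg z
  have him_exp : (Complex.log z * ((1 : ℂ) / 2)).im = Complex.arg z / 2 := by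
    simp [Complex.mul_im, Complex.log_im, Complex.log_re]
    ring
  have hre_w : w.re = Real.exp ((Complex.log z * ((1 : ℂ) / 2)).re) *
      Real.cos (Complex.arg z / 2) := by
    rw [hw, Complex.exp_re, him_exp]
  have him_w : w.im = Real.exp ((Complex.log z * ((1 : ℂ) / 2)).re) *
      Real.sin (Complex.arg z / 2) := by
    rw [hw, Complex.exp_im, him_exp]
  have hcos : 0 < Real.cos (Complex.arg z / 2) := by
    apply Real.cos_pos_of_mem_Ioo
    constructor <;> [linarith; linarith [Real.pi_pos]]
  have hsin : Real.sin (Complex.arg z / 2) < 0 := by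
    apply Real.sin_neg_of_neg_of_neg_pi_lt <;> linarith [Real.pi_pos]
  have hwre : 0 < w.re := by
    rw [hre_w]; positivity
  have hwim : w.im < 0 := by
    rw [him_w]
    exact mul_neg_of_pos_of_neg (Real.exp_pos _) hsin
  have heq : α = (ε * w.re - κ * w.im) / (κ ^ 2 + ε ^ 2) := by
    show ((Complex.I / K) * w).re = _
    rw [Complex.mul_re, Complex.div_re, Complex.div_im, hnormSq, hKre, hKim]
    simp [Complex.I_re, Complex.I_im]
    field_simp
  refine ⟨heq, ?_⟩
  rw [heq]
  apply div_pos _ hden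
  nlinarith
end

section
/- Let K = κ + iε with κ > 0, ε > 0. For each real γ > 0 define α(γ) := ε·Re((γ−K²)^{−1/2}) + κ·Im((γ−K²)^{−1/2}) + ( ε/(κ²+ε²)·Re((γ−K²)^{−1/2}) − κ/(κ²+ε²)·Im((γ−K²)^{−1/2}) )·γ. Then α(γ) = Re( (i/K)·(γ−K²)^{1/2} ) = (ε·Re((γ−K²)^{1/2}) − κ·Im((γ−K²)^{1/2}))/(κ²+ε²), and α(γ) > 0. -/
open Complex Real

/-- for `K = κ + iε` with `κ > 0`, `ε > 0` and each real `γ > 0`, the quantity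
`α(γ) := ε·Re((γ−K²)^(−1/2)) + κ·Im((γ−K²)^(−1/2))
        + (ε/(κ²+ε²)·Re((γ−K²)^(−1/2)) − κ/(κ²+ε²)·Im((γ−K²)^(−1/2)))·γ`
equals `Re((i/K)(γ−K²)^(1/2)) = (ε·Re((γ−K²)^(1/2)) − κ·Im((γ−K²)^(1/2)))/(κ²+ε²)`,
and is strictly positive. -/
theorem ps_calderon_complex_eigen_positive (κ ε γ : ℝ) (hκ : 0 < κ) (hε : 0 < ε)
    (hγ : 0 < γ) :
    let K : ℂ := (κ : ℂ) + (ε : ℂ) * Complex.I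
    let z : ℂ := ((γ : ℂ) - K ^ 2) ^ (-(1 : ℂ) / 2)
    let w : ℂ := ((γ : ℂ) - K ^ 2) ^ ((1 : ℂ) / 2)
    let α : ℝ := ε * z.re + κ * z.im +
      (ε / (κ ^ 2 + ε ^ 2) * z.re - κ / (κ ^ 2 + ε ^ 2) * z.im) * γ
    α = ((Complex.I / K) * w).re ∧
      α = (ε * w.re - κ * w.im) / (κ ^ 2 + ε ^ 2) ∧ 0 < α := by
  intro K z w α
  have hD : (0:ℝ) < κ ^ 2 + ε ^ 2 := by positivity
  set c : ℂ := (γ : ℂ) - K ^ 2 with hc_def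
  have hcre : c.re = γ - κ ^ 2 + ε ^ 2 := by
    simp [hc_def, K, pow_two, Complex.mul_re]; ring
  have hcim : c.im = -(2 * κ * ε) := by
    simp [hc_def, K, pow_two, Complex.mul_im]; ring
  have hc : c ≠ 0 := by
    intro h
    rw [h] at hcim
    simp at hcim
    rcases hcim with h' | h' <;> linarith
  have hwz : w * z = 1 := by
    show c ^ ((1:ℂ)/2) * c ^ (-(1:ℂ)/2) = 1
    rw [← Complex.cpow_add _ _ hc]
    norm_num
  have hww : w * w = c := by
    show c ^ ((1:ℂ)/2) * c ^ ((1:ℂ)/2) = c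
    rw [← Complex.cpow_add _ _ hc]
    norm_num
  have hz : z = w⁻¹ := eq_inv_of_mul_eq_one_left (by rw [mul_comm]; exact hwz)
  -- real part of w positive
  have harglt : Complex.arg c < 0 := Complex.arg_neg_iff.2 (by rw [hcim]; nlinarith)
  have harggt : -π < Complex.arg c := Complex.neg_pi_lt_arg c
  have ha : 0 < w.re := by
    have hw_eq : w = Complex.exp (Complex.log c * ((1:ℂ)/2)) :=
      Complex.cpow_def_of_ne_zero hc _
    rw [hw_eq, Complex.exp_re]
    have him : (Complex.log c * ((1:ℂ)/2)).im = Complex.arg c / 2 := by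
      simp [Complex.mul_im, Complex.log_im]
      ring
    rw [him]
    have : 0 < Real.cos (Complex.arg c / 2) := by
      apply Real.cos_pos_of_mem_Ioo
      constructor <;> [nlinarith [Real.pi_pos]; nlinarith [Real.pi_pos]]
    positivity
  have hab : w.re * w.im = -(κ * ε) := by
    have := congrArg Complex.im hww
    rw [hcim] at this
    simp [Complex.mul_im] at this
    nlinarith [this]
  have hb : w.im < 0 := by nlinarith
  have h1 : w.re ^ 2 - w.im ^ 2 = γ - κ ^ 2 + ε ^ 2 := by
    have := congrArg Complex.re hww
    rw [hcre] at this
    simp [Complex.mul_re] at this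
    nlinarith [this]
  set a := w.re
  set b := w.im
  have hS : (0:ℝ) < a ^ 2 + b ^ 2 := by positivity
  have hzre : z.re = a / (a ^ 2 + b ^ 2) := by
    rw [hz, Complex.inv_re, Complex.normSq_apply]; ring
  have hzim : z.im = -b / (a ^ 2 + b ^ 2) := by
    rw [hz, Complex.inv_im, Complex.normSq_apply]; ring
  have goal2 : α = (ε * a - κ * b) / (κ ^ 2 + ε ^ 2) := by
    have key : (κ ^ 2 + ε ^ 2) * (ε * a - κ * b) + γ * (ε * a + κ * b)
        = (a ^ 2 + b ^ 2) * (ε * a - κ * b) := by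
      linear_combination (-(ε * a + κ * b)) * h1 + (2 * (κ * a - ε * b)) * hab
    have hα : α = ((κ ^ 2 + ε ^ 2) * (ε * a - κ * b) + γ * (ε * a + κ * b)) /
        ((a ^ 2 + b ^ 2) * (κ ^ 2 + ε ^ 2)) := by
      show ε * z.re + κ * z.im +
        (ε / (κ ^ 2 + ε ^ 2) * z.re - κ / (κ ^ 2 + ε ^ 2) * z.im) * γ = _
      rw [hzre, hzim]
      field_simp
      ring
    rw [hα, key, mul_div_mul_left _ _ (ne_of_gt hS)]
  have hK : K ≠ 0 := by
    intro h
    have : K.re = 0 := by rw [h]; simp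
    simp [K] at this
    exact absurd this (ne_of_gt hκ)
  have goal1 : ((Complex.I / K) * w).re = (ε * a - κ * b) / (κ ^ 2 + ε ^ 2) := by
    rw [div_mul_eq_mul_div, Complex.div_re, Complex.normSq_apply]
    simp [K, Complex.mul_re, Complex.mul_im]
    ring
  refine ⟨by rw [goal1]; exact goal2, goal2, ?_⟩
  rw [goal2]
  have : 0 < ε * a - κ * b := by nlinarith
  positivity
end
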